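/- Let G be a finite group, n a positive integer, and u ∈ G. Suppose the set G_n(u) = {a ∈ G | (a·u⁻¹)ⁿ = aⁿ} is closed under all maps a ↦ aᵐ for integers m with gcd(m, |G|) = 1. Then for every g ∈ G and every m with gcd(m, |G|) = 1, |G_n(u, g)| = |G_n(u, gᵐ)|. -/

import Mathlib

private lemma zpow_card_inv_aux {G : Type*} [Group G] [Finite G] {m m' : ℤ}
    (h : (Nat.card G : ℤ) ∣ m * m' - 1) (a : G) : (a ^ m) ^ m' = a := by
  rw [← zpow_mul]
  have hk : a ^ ((Nat.card G : ℤ)) = 1 := by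
    rw [zpow_natCast, pow_card_eq_one']
  obtain ⟨c, hc⟩ := h
  have : m * m' = 1 + (Nat.card G : ℤ) * c := by linarith
  rw [this, zpow_add, zpow_one, zpow_mul, hk, one_zpow, mul_one]

theorem stmt_6 {G : Type*} [Group G] [Finite G] (n : ℕ) (hn : 0 < n) (u : G)
    (hcl : ∀ m : ℤ, Int.gcd m (Nat.card G) = 1 →
      ∀ a : G, (a * u⁻¹) ^ n = a ^ n → (a ^ m * u⁻¹) ^ n = (a ^ m) ^ n) :
    ∀ g : G, ∀ m : ℤ, Int.gcd m (Nat.card G) = 1 →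
      Nat.card {a : G | (a * u⁻¹) ^ n = a ^ n ∧ a ^ n = g} =
        Nat.card {a : G | (a * u⁻¹) ^ n = a ^ n ∧ a ^ n = g ^ m} := by
  intro g m hm
  -- Bézout inverse
  have hb := Int.gcd_eq_gcd_ab m (Nat.card G)
  rw [hm] at hb
  set m' : ℤ := Int.gcdA m (Nat.card G) with hm'def
  set y : ℤ := Int.gcdB m (Nat.card G) with hydef
  have hbez : m * m' + (Nat.card G : ℤ) * y = 1 := by push_cast at hb ⊢; linarith
  have hmm' : (Nat.card G : ℤ) ∣ m * m' - 1 := ⟨-y, by linarith⟩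
  have hm'm : (Nat.card G : ℤ) ∣ m' * m - 1 := by rwa [mul_comm] at hmm'
  have hm' : Int.gcd m' (Nat.card G) = 1 := by
    rw [← Int.isCoprime_iff_gcd_eq_one]
    exact ⟨m, y, by linarith⟩
  -- commuting nat and int powers
  have hpow : ∀ (a : G) (k : ℤ), (a ^ k) ^ n = (a ^ n) ^ k := by
    intro a k
    rw [← zpow_natCast (a ^ k), ← zpow_mul, mul_comm, zpow_mul, zpow_natCast]
  apply Nat.card_congr
  refine ⟨fun a => ⟨a.1 ^ m, ?_, ?_⟩, fun b => ⟨b.1 ^ m', ?_, ?_⟩, ?_, ?_⟩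
  · exact hcl m hm a.1 a.2.1
  · rw [hpow, a.2.2]
  · exact hcl m' hm' b.1 b.2.1
  · rw [hpow, b.2.2, zpow_card_inv_aux hmm' g]
  · intro a; ext; exact zpow_card_inv_aux hmm' a.1
  · intro b; ext; exact zpow_card_inv_aux hm'm b.1
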